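/- Let M be a real symmetric n×n PSD matrix with eigenvalues σ₁ ≥ … ≥ σₙ ≥ 0, σ_{k+1} ≤ σ₁/2, and orthonormal eigenvectors u₁,…,uₙ with max_{i≤k} n‖uᵢ‖∞² ≤ C. Set δ = min{√(kC/n), 1}. Then for any integer α ≥ 1 and any standard basis vector e_s: ‖M^α e_s‖₂ ≤ δ·σ₁^α + σ₁^α/2^α. -/

import Mathlib

/-- **Column norm bound for powers of incoherent matrices.** With the same setup as the
entry bound and `δ = min √(kC/n) 1`, each column of `M^α` satisfies
`‖M^α e_s‖₂ ≤ δ σ₁^α + σ₁^α/2^α`. -/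
theorem column_norm_power_incoherent
    (n k : ℕ) (hn : 0 < n) (M : Matrix (Fin n) (Fin n) ℝ)
    (σ : Fin n → ℝ) (u : Fin n → Fin n → ℝ)
    (hdecomp : M = ∑ i, σ i • Matrix.vecMulVec (u i) (u i))
    (horth : ∀ i j, ∑ l, u i l * u j l = if i = j then (1 : ℝ) else 0)
    (hmono : Antitone σ) (hnonneg : ∀ i, 0 ≤ σ i)
    (htail : ∀ i : Fin n, k ≤ (i : ℕ) → σ i ≤ σ ⟨0, hn⟩ / 2)
    (C : ℝ) (hcoh : ∀ i : Fin n, (i : ℕ) < k → ∀ j, (n : ℝ) * (u i j) ^ 2 ≤ C)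
    (δ : ℝ) (hδ : δ = min (Real.sqrt ((k : ℝ) * C / n)) 1)
    (α : ℕ) (hα : 1 ≤ α) (s : Fin n) :
    Real.sqrt (∑ j, ((M ^ α).mulVec (Pi.single s 1) j) ^ 2)
      ≤ δ * (σ ⟨0, hn⟩) ^ α + (σ ⟨0, hn⟩) ^ α / 2 ^ α := by
  have hσ0 : 0 ≤ σ ⟨0, hn⟩ := hnonneg _
  have hδ0 : 0 ≤ δ := by
    rw [hδ]; exact le_min (Real.sqrt_nonneg _) one_pos.le
  -- product of rank one projectors
  have key : ∀ i j, Matrix.vecMulVec (u i) (u i) * Matrix.vecMulVec (u j) (u j)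
      = (if i = j then (1:ℝ) else 0) • Matrix.vecMulVec (u i) (u j) := by
    intro i j
    ext x y
    simp only [Matrix.mul_apply, Matrix.vecMulVec_apply, Matrix.smul_apply, smul_eq_mul]
    rw [← horth i j, Finset.sum_mul]
    congr 1; ext l; ring
  -- power formula
  have hpow : ∀ m : ℕ, M ^ (m+1) = ∑ i, (σ i ^ (m+1)) • Matrix.vecMulVec (u i) (u i) := by
    intro m
    induction m with
    | zero => simpa using hdecomp
    | succ m ih =>
      rw [pow_succ, ih, hdecomp, Finset.sum_mul_sum]
      refine Finset.sum_congr rfl fun i _ => ?_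
      calc ∑ j, (σ i ^ (m + 1) • Matrix.vecMulVec (u i) (u i)) * (σ j • Matrix.vecMulVec (u j) (u j))
          = ∑ j, if i = j then (σ i ^ (m+1) * σ j) • Matrix.vecMulVec (u i) (u j) else 0 := by
            refine Finset.sum_congr rfl fun j _ => ?_
            rw [smul_mul_smul_comm, key, smul_smul]
            split <;> simp
        _ = σ i ^ (m+1+1) • Matrix.vecMulVec (u i) (u i) := by
            rw [Finset.sum_ite_eq Finset.univ i]
            simp [pow_succ]
  obtain ⟨m, rfl⟩ : ∃ m, α = m + 1 := ⟨α - 1, (Nat.succ_pred_eq_of_pos hα).symm⟩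
  set a := m + 1 with ha
  -- column entries
  have hcol : ∀ j, (M ^ a).mulVec (Pi.single s 1) j = ∑ i, (σ i ^ a * u i s) * u i j := by
    intro j
    simp only [Matrix.mulVec_single, mul_one]
    rw [hpow m]
    simp only [Pi.smul_apply, MulOpposite.op_one, one_smul, Matrix.col_apply, Matrix.sum_apply, Matrix.smul_apply, Matrix.vecMulVec_apply, smul_eq_mul]
    refine Finset.sum_congr rfl fun i _ => by ring
  -- orthonormal columns
  have hcolnorm : ∑ i, (u i s) ^ 2 = 1 := by
    have hUU : (Matrix.of u) * Matrix.transpose (Matrix.of u) = 1 := by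
      ext i j
      simpa [Matrix.mul_apply, Matrix.one_apply] using horth i j
    have hUU' : Matrix.transpose (Matrix.of u) * (Matrix.of u) = 1 := mul_eq_one_comm.mp hUU
    have h2 := congrArg (fun A : Matrix (Fin n) (Fin n) ℝ => A s s) hUU'
    simpa [Matrix.mul_apply, Matrix.one_apply, sq] using h2
  -- sum of squares via orthonormality
  have hsq : ∑ j, ((M ^ a).mulVec (Pi.single s 1) j) ^ 2 = ∑ i, (σ i ^ a * u i s) ^ 2 := by
    simp_rw [hcol]
    have expand : ∀ j : Fin n, (∑ i, (σ i ^ a * u i s) * u i j) ^ 2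
        = ∑ i, ∑ i', ((σ i ^ a * u i s) * (σ i' ^ a * u i' s)) * (u i j * u i' j) := by
      intro j
      rw [sq, Finset.sum_mul_sum]
      exact Finset.sum_congr rfl fun i _ => Finset.sum_congr rfl fun i' _ => by ring
    simp_rw [expand]
    rw [Finset.sum_comm]
    refine Finset.sum_congr rfl fun i _ => ?_
    rw [Finset.sum_comm]
    calc ∑ i', ∑ j, ((σ i ^ a * u i s) * (σ i' ^ a * u i' s)) * (u i j * u i' j)
        = ∑ i', ((σ i ^ a * u i s) * (σ i' ^ a * u i' s)) * (if i = i' then (1:ℝ) else 0) := by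
          refine Finset.sum_congr rfl fun i' _ => ?_
          rw [← Finset.mul_sum, horth]
      _ = (σ i ^ a * u i s) ^ 2 := by
          simp only [mul_ite, mul_one, mul_zero]
          rw [Finset.sum_ite_eq Finset.univ i]
          simp [sq]
  rw [hsq]
  set σ0 := σ ⟨0, hn⟩ with hσ0def
  set head := Finset.univ.filter (fun i : Fin n => (i : ℕ) < k) with hhead
  have hp : (0:ℝ) ≤ σ0 ^ a := pow_nonneg hσ0 a
  have hq : (0:ℝ) ≤ σ0 ^ a / 2 ^ a := by positivity
  -- partial sums of squared column entries are ≤ 1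
  have hpart : ∀ t : Finset (Fin n), ∑ i ∈ t, (u i s) ^ 2 ≤ 1 := by
    intro t
    rw [← hcolnorm]
    exact Finset.sum_le_sum_of_subset_of_nonneg (Finset.subset_univ t)
      (fun i _ _ => sq_nonneg _)
  -- head column mass ≤ δ²
  have hδsq : ∑ i ∈ head, (u i s) ^ 2 ≤ δ ^ 2 := by
    rcases Nat.eq_zero_or_pos k with hk | hk
    · have he : head = ∅ := by
        ext i; simp [hhead, hk]
      have : δ = 0 := by
        rw [hδ, hk]; simp
      simp [he, this]
    · have hC : 0 ≤ C := by
        refine le_trans ?_ (hcoh ⟨0, hn⟩ (by simpa using hk) s)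
        positivity
      have hkCn : (0:ℝ) ≤ (k : ℝ) * C / n := by positivity
      have hS2 : ∑ i ∈ head, (u i s) ^ 2 ≤ (k : ℝ) * C / n := by
        have hcard : (head.card : ℝ) ≤ (k : ℝ) := by
          have : head.card ≤ (Finset.range k).card := by
            refine Finset.card_le_card_of_injOn (fun i => (i : ℕ)) ?_ ?_
            · intro i hi
              simp only [hhead, Finset.mem_filter] at hi
              simpa [List.mem_filter] using hi
            · exact fun i _ j _ h => Fin.val_injective h
          simpa using this
        calc ∑ i ∈ head, (u i s) ^ 2 ≤ ∑ _i ∈ head, C / n := by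
              refine Finset.sum_le_sum fun i hi => ?_
              have hik : (i : ℕ) < k := by
                simpa [hhead] using (Finset.mem_filter.mp hi).2
              have := hcoh i hik s
              rw [le_div_iff₀ (by exact_mod_cast hn)]
              linarith
          _ = (head.card : ℝ) * (C / n) := by
              rw [Finset.sum_const, nsmul_eq_mul]
          _ ≤ (k : ℝ) * (C / n) := by
              apply mul_le_mul_of_nonneg_right hcard (by positivity)
          _ = (k : ℝ) * C / n := by ring
      rw [hδ]
      rcases le_total (Real.sqrt ((k : ℝ) * C / n)) 1 with h | h
      · rw [min_eq_left h, Real.sq_sqrt hkCn]; exact hS2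
      · rw [min_eq_right h]; simpa using hpart head
  -- head bound
  have Hhead : ∑ i ∈ head, (σ i ^ a * u i s) ^ 2 ≤ (δ * σ0 ^ a) ^ 2 := by
    calc ∑ i ∈ head, (σ i ^ a * u i s) ^ 2
        ≤ ∑ i ∈ head, (σ0 ^ a) ^ 2 * (u i s) ^ 2 := by
          refine Finset.sum_le_sum fun i _ => ?_
          have h1 : σ i ≤ σ0 := hmono (by simp [Fin.le_def])
          have h2 : σ i ^ a ≤ σ0 ^ a := pow_le_pow_left₀ (hnonneg i) h1 a
          have h3 : (σ i ^ a) ^ 2 ≤ (σ0 ^ a) ^ 2 :=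
            pow_le_pow_left₀ (pow_nonneg (hnonneg i) a) h2 2
          calc (σ i ^ a * u i s) ^ 2 = (σ i ^ a) ^ 2 * (u i s) ^ 2 := by ring
            _ ≤ (σ0 ^ a) ^ 2 * (u i s) ^ 2 :=
              mul_le_mul_of_nonneg_right h3 (sq_nonneg _)
      _ = (σ0 ^ a) ^ 2 * ∑ i ∈ head, (u i s) ^ 2 := by rw [Finset.mul_sum]
      _ ≤ (σ0 ^ a) ^ 2 * δ ^ 2 := mul_le_mul_of_nonneg_left hδsq (sq_nonneg _)
      _ = (δ * σ0 ^ a) ^ 2 := by ring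
  -- tail bound
  have Htail : ∑ i ∈ headᶜ, (σ i ^ a * u i s) ^ 2 ≤ (σ0 ^ a / 2 ^ a) ^ 2 := by
    calc ∑ i ∈ headᶜ, (σ i ^ a * u i s) ^ 2
        ≤ ∑ i ∈ headᶜ, (σ0 ^ a / 2 ^ a) ^ 2 * (u i s) ^ 2 := by
          refine Finset.sum_le_sum fun i hi => ?_
          have hik : k ≤ (i : ℕ) := by
            have := Finset.mem_compl.mp hi
            simpa [hhead] using this
          have h2 : σ i ≤ σ0 / 2 := htail i hik
          have h3 : σ i ^ a ≤ (σ0 / 2) ^ a := pow_le_pow_left₀ (hnonneg i) h2 a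
          rw [div_pow] at h3
          have h4 : (σ i ^ a) ^ 2 ≤ (σ0 ^ a / 2 ^ a) ^ 2 :=
            pow_le_pow_left₀ (pow_nonneg (hnonneg i) a) h3 2
          calc (σ i ^ a * u i s) ^ 2 = (σ i ^ a) ^ 2 * (u i s) ^ 2 := by ring
            _ ≤ (σ0 ^ a / 2 ^ a) ^ 2 * (u i s) ^ 2 :=
              mul_le_mul_of_nonneg_right h4 (sq_nonneg _)
      _ = (σ0 ^ a / 2 ^ a) ^ 2 * ∑ i ∈ headᶜ, (u i s) ^ 2 := by rw [Finset.mul_sum]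
      _ ≤ (σ0 ^ a / 2 ^ a) ^ 2 * 1 := mul_le_mul_of_nonneg_left (hpart _) (sq_nonneg _)
      _ = (σ0 ^ a / 2 ^ a) ^ 2 := mul_one _
  have htotal : ∑ i, (σ i ^ a * u i s) ^ 2 ≤ (δ * σ0 ^ a + σ0 ^ a / 2 ^ a) ^ 2 := by
    rw [← Finset.sum_add_sum_compl head]
    nlinarith [mul_nonneg (mul_nonneg hδ0 hp) hq]
  calc Real.sqrt (∑ i, (σ i ^ a * u i s) ^ 2)
      ≤ Real.sqrt ((δ * σ0 ^ a + σ0 ^ a / 2 ^ a) ^ 2) := Real.sqrt_le_sqrt htotal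
    _ = δ * σ0 ^ a + σ0 ^ a / 2 ^ a := Real.sqrt_sq (by positivity)
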